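/- Let Φ : P → P be a linear shift, i.e. the K-algebra homomorphism determined by Φ(xᵢ) = aᵢxᵢ + bᵢ with aᵢ ∈ K ∖ {0} and bᵢ ∈ K for i = 1,…,n, and let I ⊆ P be an ideal. Then for every monomial order σ, LT_σ(Ideal.map Φ I) = LT_σ(I). In particular, I and Φ(I) have the same leading term ideal for every monomial order, hence the same GFan number. -/

import Mathlib

set_option maxHeartbeats 1000000


open MvPolynomial

/-- The leading monomial (σ-largest exponent vector in the support) of a polynomial. -/
noncomputable def leadMonomial {n : ℕ} {K : Type*} [Field K]
    (m : MonomialOrder (Fin n)) (f : MvPolynomial (Fin n) K) : Fin n →₀ ℕ :=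
  m.toSyn.symm (f.support.sup fun s => m.toSyn s)

/-- The leading term ideal of an ideal. -/
noncomputable def leadTermIdeal {n : ℕ} {K : Type*} [Field K]
    (m : MonomialOrder (Fin n)) (I : Ideal (MvPolynomial (Fin n) K)) :
    Ideal (MvPolynomial (Fin n) K) :=
  Ideal.span {g | ∃ f ∈ I, f ≠ 0 ∧ g = monomial (leadMonomial m f) (1 : K)}

namespace LinearShiftAux

variable {n : ℕ} {K : Type*} [Field K]

lemma support_mul_le {p q : MvPolynomial (Fin n) K} {α₁ α₂ : Fin n →₀ ℕ}
    (hp : ∀ β ∈ p.support, β ≤ α₁) (hq : ∀ β ∈ q.support, β ≤ α₂) :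
    ∀ β ∈ (p * q).support, β ≤ α₁ + α₂ := by
  intro β hβ
  obtain ⟨β₁, h₁, β₂, h₂, rfl⟩ := Finset.mem_add.mp (MvPolynomial.support_mul p q hβ)
  exact add_le_add (hp _ h₁) (hq _ h₂)

lemma coeff_top_mul {p q : MvPolynomial (Fin n) K} {α₁ α₂ : Fin n →₀ ℕ}
    (hp : ∀ β ∈ p.support, β ≤ α₁) (hq : ∀ β ∈ q.support, β ≤ α₂) :
    coeff (α₁ + α₂) (p * q) = coeff α₁ p * coeff α₂ q := by
  rw [coeff_mul]
  apply Finset.sum_eq_single_of_mem (α₁, α₂) (Finset.HasAntidiagonal.mem_antidiagonal.mpr rfl)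
  intro x hx hne
  have e : x.1 + x.2 = α₁ + α₂ := Finset.HasAntidiagonal.mem_antidiagonal.mp hx
  by_contra h
  have h1 : coeff x.1 p ≠ 0 := left_ne_zero_of_mul h
  have h2 : coeff x.2 q ≠ 0 := right_ne_zero_of_mul h
  have l1 : x.1 ≤ α₁ := hp _ (mem_support_iff.mpr h1)
  have l2 : x.2 ≤ α₂ := hq _ (mem_support_iff.mpr h2)
  apply hne
  have e1 : x.1 = α₁ := by
    ext j
    have h3 := DFunLike.congr_fun e j
    have a1 := Finsupp.le_def.mp l1 j
    have a2 := Finsupp.le_def.mp l2 j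
    simp only [Finsupp.add_apply] at h3
    omega
  have e2 : x.2 = α₂ := by
    ext j
    have h3 := DFunLike.congr_fun e j
    have a1 := Finsupp.le_def.mp l1 j
    have a2 := Finsupp.le_def.mp l2 j
    simp only [Finsupp.add_apply] at h3
    omega
  exact Prod.ext e1 e2

lemma shift_pow (i : Fin n) (ai bi : K) (k : ℕ) :
    (∀ β ∈ ((C ai * X i + C bi) ^ k : MvPolynomial (Fin n) K).support,
      β ≤ Finsupp.single i k)
    ∧ coeff (Finsupp.single i k) ((C ai * X i + C bi) ^ k : MvPolynomial (Fin n) K)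
      = ai ^ k := by
  induction k with
  | zero =>
    constructor
    · intro β hβ
      simp only [pow_zero] at hβ
      have : β = 0 := by
        by_contra hne
        rw [mem_support_iff, coeff_one, if_neg (by simpa using fun h => hne h.symm)] at hβ
        exact hβ rfl
      simp [this]
    · simp [coeff_one]
  | succ k ih =>
    have base_supp : ∀ β ∈ ((C ai * X i + C bi : MvPolynomial (Fin n) K)).support,
        β ≤ Finsupp.single i 1 := by
      intro β hβ
      rw [mem_support_iff, coeff_add, coeff_C_mul, coeff_X', coeff_C] at hβ
      by_cases h1 : Finsupp.single i 1 = β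
      · exact h1 ▸ le_refl _
      · by_cases h0 : 0 = β
        · exact h0 ▸ (zero_le : 0 ≤ Finsupp.single i 1)
        · simp [h1, h0] at hβ
    have base_coeff : coeff (Finsupp.single i 1) (C ai * X i + C bi : MvPolynomial (Fin n) K)
        = ai := by
      rw [coeff_add, coeff_C_mul, coeff_X', coeff_C, if_pos rfl,
        if_neg (fun h => one_ne_zero (Finsupp.single_eq_zero.mp h.symm))]
      ring
    have hsingle : Finsupp.single i (k + 1) = Finsupp.single i k + Finsupp.single i 1 := by
      rw [← Finsupp.single_add]
    constructor
    · intro β hβ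
      rw [pow_succ] at hβ
      rw [hsingle]
      exact support_mul_le ih.1 base_supp β hβ
    · rw [pow_succ, hsingle, coeff_top_mul ih.1 base_supp, ih.2, base_coeff, pow_succ]

variable (a b : Fin n → K)
  (Φ : MvPolynomial (Fin n) K →ₐ[K] MvPolynomial (Fin n) K)
  (hΦ : ∀ i, Φ (X i) = C (a i) * X i + C (b i))

include hΦ in
lemma shift_monomial (α : Fin n →₀ ℕ) :
    (∀ β ∈ (Φ (monomial α (1 : K))).support, β ≤ α)
    ∧ coeff α (Φ (monomial α (1 : K))) = α.prod fun i k => a i ^ k := by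
  induction α using Finsupp.induction with
  | zero =>
    have : (monomial (0 : Fin n →₀ ℕ) (1 : K)) = (1 : MvPolynomial (Fin n) K) := by
      simp [monomial_zero']
    rw [this, map_one]
    constructor
    · intro β hβ
      have : β = 0 := by
        by_contra hne
        rw [mem_support_iff, coeff_one, if_neg (by simpa using fun h => hne h.symm)] at hβ
        exact hβ rfl
      simp [this]
    · simp [coeff_one]
  | single_add i k α hi hk ih =>
    have key : (monomial (Finsupp.single i k + α) (1 : K))
        = X i ^ k * monomial α (1 : K) := by
      rw [X_pow_eq_monomial, monomial_mul, one_mul]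
    rw [key, map_mul, map_pow, hΦ i]
    have hp := shift_pow i (a i) (b i) k
    constructor
    · exact support_mul_le hp.1 ih.1
    · rw [coeff_top_mul hp.1 ih.1, hp.2, ih.2,
        Finsupp.prod_add_index' (fun j => pow_zero (a j)) (fun j x y => pow_add (a j) x y)]
      congr 1
      exact (Finsupp.prod_single_index (h := fun j k => a j ^ k) (pow_zero (a i))).symm

variable (m : MonomialOrder (Fin n))

include hΦ in
lemma coeff_shift (f : MvPolynomial (Fin n) K) (β : Fin n →₀ ℕ) :
    coeff β (Φ f) = ∑ v ∈ f.support, coeff v f * coeff β (Φ (monomial v (1 : K))) := by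
  conv_lhs => rw [f.as_sum, map_sum, coeff_sum]
  apply Finset.sum_congr rfl
  intro v _
  have : (monomial v (coeff v f)) = C (coeff v f) * monomial v (1 : K) := by
    rw [C_mul_monomial, mul_one]
  rw [this, map_mul, ← MvPolynomial.algebraMap_eq, AlgHom.commutes,
    MvPolynomial.algebraMap_eq, coeff_C_mul]

include hΦ in
lemma supp_bound (f : MvPolynomial (Fin n) K) :
    ∀ β ∈ (Φ f).support, m.toSyn β ≤ f.support.sup fun s => m.toSyn s := by
  intro β hβ
  rw [mem_support_iff, coeff_shift a b Φ hΦ f β] at hβ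
  obtain ⟨v, hv, hvne⟩ := Finset.exists_ne_zero_of_sum_ne_zero hβ
  have h2 : coeff β (Φ (monomial v (1 : K))) ≠ 0 := right_ne_zero_of_mul hvne
  have hle : β ≤ v := (shift_monomial a b Φ hΦ v).1 β (mem_support_iff.mpr h2)
  exact le_trans (m.toSyn_monotone hle) (Finset.le_sup hv)

include hΦ in
lemma lead_mem {f : MvPolynomial (Fin n) K} (hf : f ≠ 0) :
    leadMonomial m f ∈ f.support := by
  obtain ⟨v, hv, hveq⟩ := Finset.exists_mem_eq_sup f.support
    (MvPolynomial.support_nonempty.mpr hf) (fun s => m.toSyn s)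
  have : leadMonomial m f = v := by
    rw [leadMonomial, hveq, AddEquiv.symm_apply_apply]
  rw [this]; exact hv

include hΦ in
lemma top_coeff {f : MvPolynomial (Fin n) K} (hf : f ≠ 0) :
    coeff (leadMonomial m f) (Φ f)
      = coeff (leadMonomial m f) f * (leadMonomial m f).prod fun i k => a i ^ k := by
  set L := leadMonomial m f with hL
  have hLsyn : m.toSyn L = f.support.sup fun s => m.toSyn s := by
    rw [hL, leadMonomial, AddEquiv.apply_symm_apply]
  rw [coeff_shift a b Φ hΦ f L]
  rw [Finset.sum_eq_single L]
  · rw [(shift_monomial a b Φ hΦ L).2]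
  · intro v hv hvne
    by_contra h
    have h2 : coeff L (Φ (monomial v (1 : K))) ≠ 0 := right_ne_zero_of_mul h
    have hle : L ≤ v := (shift_monomial a b Φ hΦ v).1 L (mem_support_iff.mpr h2)
    have h1 : m.toSyn L ≤ m.toSyn v := m.toSyn_monotone hle
    have h3 : m.toSyn v ≤ m.toSyn L := hLsyn ▸ Finset.le_sup hv
    exact hvne (m.toSyn.injective (le_antisymm h3 h1))
  · intro hL'
    exact absurd (lead_mem a b Φ hΦ m hf) hL'

include hΦ in
lemma top_coeff_ne_zero (ha : ∀ i, a i ≠ 0) {f : MvPolynomial (Fin n) K} (hf : f ≠ 0) :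
    coeff (leadMonomial m f) (Φ f) ≠ 0 := by
  rw [top_coeff a b Φ hΦ m hf]
  apply mul_ne_zero
  · exact mem_support_iff.mp (lead_mem a b Φ hΦ m hf)
  · rw [Finsupp.prod]
    exact Finset.prod_ne_zero_iff.mpr fun i _ => pow_ne_zero _ (ha i)

include hΦ in
lemma lead_shift (ha : ∀ i, a i ≠ 0) {f : MvPolynomial (Fin n) K} (hf : f ≠ 0) :
    leadMonomial m (Φ f) = leadMonomial m f := by
  have h1 : m.toSyn (leadMonomial m (Φ f)) = (Φ f).support.sup fun s => m.toSyn s := by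
    rw [leadMonomial, AddEquiv.apply_symm_apply]
  have h2 : m.toSyn (leadMonomial m f) = f.support.sup fun s => m.toSyn s := by
    rw [leadMonomial, AddEquiv.apply_symm_apply]
  apply m.toSyn.injective
  apply le_antisymm
  · rw [h1, h2]
    exact Finset.sup_le (supp_bound a b Φ hΦ m f)
  · rw [h1]
    have hmem : leadMonomial m f ∈ (Φ f).support :=
      mem_support_iff.mpr (top_coeff_ne_zero a b Φ hΦ m ha hf)
    exact Finset.le_sup hmem

include hΦ in
lemma le_aux (ha : ∀ i, a i ≠ 0) (I : Ideal (MvPolynomial (Fin n) K)) :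
    leadTermIdeal m I ≤
      leadTermIdeal m (Ideal.map (Φ : MvPolynomial (Fin n) K →+* MvPolynomial (Fin n) K) I) := by
  apply Ideal.span_mono
  rintro g ⟨f, hfI, hf0, rfl⟩
  refine ⟨Φ f, Ideal.mem_map_of_mem _ hfI, ?_, ?_⟩
  · intro h
    exact top_coeff_ne_zero a b Φ hΦ m ha hf0 (by rw [h, coeff_zero])
  · rw [lead_shift a b Φ hΦ m ha hf0]

end LinearShiftAux

/-- A linear shift `Xᵢ ↦ aᵢ Xᵢ + bᵢ` (`aᵢ ≠ 0`) preserves the leading term ideal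
for every monomial order; in particular, `I` and `Φ(I)` have the same GFan number. -/
theorem linear_shift_preserves_leading_term_ideal
    {n : ℕ} {K : Type*} [Field K] (a b : Fin n → K) (ha : ∀ i, a i ≠ 0)
    (Φ : MvPolynomial (Fin n) K →ₐ[K] MvPolynomial (Fin n) K)
    (hΦ : ∀ i, Φ (X i) = C (a i) * X i + C (b i))
    (I : Ideal (MvPolynomial (Fin n) K)) (m : MonomialOrder (Fin n)) :
    leadTermIdeal m (Ideal.map (Φ : MvPolynomial (Fin n) K →+* MvPolynomial (Fin n) K) I)
      = leadTermIdeal m I := by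
  set Ψ : MvPolynomial (Fin n) K →ₐ[K] MvPolynomial (Fin n) K :=
    aeval (fun i => C (a i)⁻¹ * X i + C (-(b i) * (a i)⁻¹)) with hΨdef
  have hΨ : ∀ i, Ψ (X i) = C (a i)⁻¹ * X i + C (-(b i) * (a i)⁻¹) := fun i => aeval_X _ i
  have ha' : ∀ i, (a i)⁻¹ ≠ 0 := fun i => inv_ne_zero (ha i)
  have hcomp : Ψ.comp Φ = AlgHom.id K (MvPolynomial (Fin n) K) := by
    apply MvPolynomial.algHom_ext
    intro i
    have h1 : a i * (-(b i) * (a i)⁻¹) = -(b i) := by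
      rw [mul_comm (-(b i)), ← mul_assoc, mul_inv_cancel₀ (ha i), one_mul]
    rw [AlgHom.comp_apply, hΦ i, map_add, map_mul, hΨ i, AlgHom.id_apply]
    have hC : ∀ c : K, Ψ (C c) = C c := fun c => by
      rw [← MvPolynomial.algebraMap_eq, AlgHom.commutes, MvPolynomial.algebraMap_eq]
    rw [hC, hC, mul_add, ← mul_assoc, ← C_mul, ← C_mul,
      mul_inv_cancel₀ (ha i), C_1, one_mul, h1, add_assoc, ← C_add,
      neg_add_cancel, C_0, add_zero]
  have hmapmap : Ideal.map (Ψ : MvPolynomial (Fin n) K →+* MvPolynomial (Fin n) K)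
      (Ideal.map (Φ : MvPolynomial (Fin n) K →+* MvPolynomial (Fin n) K) I) = I := by
    rw [Ideal.map_map]
    have : (Ψ : MvPolynomial (Fin n) K →+* MvPolynomial (Fin n) K).comp
        (Φ : MvPolynomial (Fin n) K →+* MvPolynomial (Fin n) K)
        = RingHom.id (MvPolynomial (Fin n) K) := by
      rw [← AlgHom.comp_toRingHom, hcomp]
      rfl
    rw [this, Ideal.map_id]
  apply le_antisymm
  · have h := LinearShiftAux.le_aux (fun i => (a i)⁻¹) (fun i => -(b i) * (a i)⁻¹)
      Ψ hΨ m ha'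
      (Ideal.map (Φ : MvPolynomial (Fin n) K →+* MvPolynomial (Fin n) K) I)
    rw [hmapmap] at h
    exact h
  · exact LinearShiftAux.le_aux a b Φ hΦ m ha I
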